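/- Let r, n ∈ ℕ, A ∈ ℝ^{r×r}, E ∈ ℝ^{r×n}, let S ∈ ℝ^{r×r} and P ∈ ℝ^{2n×2n} be symmetric positive definite, and let α > 0, ρ > 0. If the symmetric block matrix with blocks [AᵀS + SA + ρS, α^{-1}S E G₀; α^{-1}G₀ᵀEᵀS, −ρP] is negative definite, then for every ζ ∈ ℝ^r and every x ∈ ℝ^{2n} with σ := G₀x ≠ 0 one has ζᵀ(AᵀS + SA)ζ + 2 ζᵀ S E σ < ρ (xᵀR(σ)PR(σ)x − ζᵀSζ). -/

import Mathlib

open Matrix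

noncomputable section

/-- Euclidean norm of a real vector. -/
def enorm {n : ℕ} (v : Fin n → ℝ) : ℝ := Real.sqrt (v ⬝ᵥ v)

/-- The block matrix `G₀ = [I_n 0] ∈ ℝ^{n×2n}`. -/
def G0 (n : ℕ) : Matrix (Fin n) (Fin n ⊕ Fin n) ℝ := fromCols 1 0

/-- The scalar gain `c(σ) = 1/√‖σ‖ + α`. -/
def cfun {n : ℕ} (α : ℝ) (σ : Fin n → ℝ) : ℝ := 1 / Real.sqrt (enorm σ) + α

/-- The matrix `R(σ) = diag(c(σ)I_n, I_n)`. -/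
def Rmat {n : ℕ} (α : ℝ) (σ : Fin n → ℝ) : Matrix (Fin n ⊕ Fin n) (Fin n ⊕ Fin n) ℝ :=
  fromBlocks (cfun α σ • 1) 0 0 1

/-- Lemma 1 of the paper: the LMI (30) implies `v̇ < ρ(V − v)`. -/
theorem stmt0 {r n : ℕ} (A : Matrix (Fin r) (Fin r) ℝ) (E : Matrix (Fin r) (Fin n) ℝ)
    (S : Matrix (Fin r) (Fin r) ℝ) (P : Matrix (Fin n ⊕ Fin n) (Fin n ⊕ Fin n) ℝ)
    (hS : S.PosDef) (hP : P.PosDef) (α ρ : ℝ) (hα : 0 < α) (hρ : 0 < ρ)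
    (hLMI : (-(fromBlocks (Aᵀ * S + S * A + ρ • S) (α⁻¹ • (S * E * G0 n))
      (α⁻¹ • ((G0 n)ᵀ * Eᵀ * S)) (-(ρ • P)))).PosDef) :
    ∀ (ζ : Fin r → ℝ) (x : Fin n ⊕ Fin n → ℝ), G0 n *ᵥ x ≠ 0 →
      ζ ⬝ᵥ ((Aᵀ * S + S * A) *ᵥ ζ) + 2 * (ζ ⬝ᵥ (S *ᵥ (E *ᵥ (G0 n *ᵥ x)))) <
        ρ * (x ⬝ᵥ ((Rmat α (G0 n *ᵥ x) * P * Rmat α (G0 n *ᵥ x)) *ᵥ x)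
          - ζ ⬝ᵥ (S *ᵥ ζ)) := by
  intro ζ x hσ
  set σ : Fin n → ℝ := G0 n *ᵥ x with hσdef
  set c : ℝ := cfun α σ with hcdef
  have hG0 : ∀ z : Fin n ⊕ Fin n → ℝ, G0 n *ᵥ z = z ∘ Sum.inl := by
    intro z; ext i
    simp [G0, fromCols, mulVec, dotProduct, Fintype.sum_sum_type, Matrix.one_apply]
  -- positivity of c
  have hσσ : 0 < σ ⬝ᵥ σ := by
    have h0 : 0 ≤ σ ⬝ᵥ σ := Finset.sum_nonneg fun i _ => mul_self_nonneg _
    rcases lt_or_eq_of_le h0 with h | h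
    · exact h
    · exact absurd (dotProduct_self_eq_zero.mp h.symm) hσ
  have hsqrt : 0 < Real.sqrt (enorm σ) :=
    Real.sqrt_pos.mpr (Real.sqrt_pos.mpr hσσ)
  have hc : α < c := by
    rw [hcdef, cfun]
    have : 0 < 1 / Real.sqrt (enorm σ) := by positivity
    linarith
  have hc0 : 0 < c := lt_trans hα hc
  -- y = R x
  set y : Fin n ⊕ Fin n → ℝ := Rmat α σ *ᵥ x with hydef
  have hy : y = Sum.elim (c • (x ∘ Sum.inl)) (x ∘ Sum.inr) := by
    rw [hydef]; simp [Rmat, fromBlocks_mulVec, smul_mulVec]; rfl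
  have hσx : σ = x ∘ Sum.inl := hG0 x
  have hy0 : y ≠ 0 := by
    intro h
    apply hσ
    ext i
    have := congrFun h (Sum.inl i)
    rw [hy] at this
    simp only [Sum.elim_inl, Pi.smul_apply, Pi.zero_apply, smul_eq_mul] at this
    have : x (Sum.inl i) = 0 := by
      rcases mul_eq_zero.mp this with h' | h'
      · exact absurd h' (ne_of_gt hc0)
      · exact h'
    simp [hσx, this]
  have hGy : G0 n *ᵥ y = c • σ := by
    rw [hG0 y, hy, hσx]; ext i; simp
  -- R symmetric, reduce RPR quadratic form
  have hRsym : (Rmat α σ)ᵀ = Rmat α σ := by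
    simp [Rmat, fromBlocks_transpose, transpose_smul]
  have hxR : x ᵥ* Rmat α σ = y := by
    rw [← hRsym, vecMul_transpose]
  have hRPR : x ⬝ᵥ ((Rmat α σ * P * Rmat α σ) *ᵥ x) = y ⬝ᵥ (P *ᵥ y) := by
    have e1 : (Rmat α σ * P * Rmat α σ) *ᵥ x = Rmat α σ *ᵥ (P *ᵥ y) := by
      rw [Matrix.mul_assoc, ← mulVec_mulVec, ← mulVec_mulVec, ← hydef]
    rw [e1, dotProduct_mulVec, hxR]
  -- abbreviations
  set a1 : ℝ := ζ ⬝ᵥ ((Aᵀ * S + S * A) *ᵥ ζ) with ha1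
  set s : ℝ := ζ ⬝ᵥ (S *ᵥ ζ) with hs
  set b : ℝ := ζ ⬝ᵥ (S *ᵥ (E *ᵥ σ)) with hb
  set p : ℝ := y ⬝ᵥ (P *ᵥ y) with hp
  -- the LMI quadratic form
  have hquad : ∀ (u : Fin r → ℝ) (v : Fin n ⊕ Fin n → ℝ), Sum.elim u v ≠ 0 →
      u ⬝ᵥ ((Aᵀ * S + S * A + ρ • S) *ᵥ u) + u ⬝ᵥ ((α⁻¹ • (S * E * G0 n)) *ᵥ v)
        + v ⬝ᵥ ((α⁻¹ • ((G0 n)ᵀ * Eᵀ * S)) *ᵥ u) + v ⬝ᵥ ((-(ρ • P)) *ᵥ v) < 0 := by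
    intro u v huv
    have := hLMI.dotProduct_mulVec_pos huv
    rw [neg_mulVec] at this
    simp only [star_trivial, dotProduct_neg] at this
    have h2 : Sum.elim u v ⬝ᵥ
        ((fromBlocks (Aᵀ * S + S * A + ρ • S) (α⁻¹ • (S * E * G0 n))
          (α⁻¹ • ((G0 n)ᵀ * Eᵀ * S)) (-(ρ • P))) *ᵥ Sum.elim u v) < 0 := by linarith
    rwa [fromBlocks_mulVec, sumElim_dotProduct_sumElim, Sum.elim_comp_inl,
      Sum.elim_comp_inr, dotProduct_add, dotProduct_add, ← add_assoc] at h2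
  -- cross-term computations
  have hB12 : ∀ t : ℝ, (t • ζ) ⬝ᵥ ((α⁻¹ • (S * E * G0 n)) *ᵥ y) = t * (α⁻¹ * c) * b := by
    intro t
    rw [smul_mulVec, dotProduct_smul, smul_dotProduct, ← mulVec_mulVec,
      ← mulVec_mulVec, hGy, mulVec_smul, mulVec_smul, dotProduct_smul]
    simp [hb]; ring
  have hB21 : ∀ t : ℝ, y ⬝ᵥ ((α⁻¹ • ((G0 n)ᵀ * Eᵀ * S)) *ᵥ (t • ζ)) = t * (α⁻¹ * c) * b := by
    intro t
    have hST : Sᵀ = S := hS.1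
    have htr : (G0 n)ᵀ * Eᵀ * S = (S * E * G0 n)ᵀ := by
      rw [transpose_mul, transpose_mul, hST, ← Matrix.mul_assoc]
    rw [smul_mulVec, dotProduct_smul, mulVec_smul, dotProduct_smul, htr,
      dotProduct_mulVec, vecMul_transpose, dotProduct_comm, ← mulVec_mulVec,
      ← mulVec_mulVec, hGy, mulVec_smul, mulVec_smul, dotProduct_smul]
    simp [hb]; ring
  -- the scaled inequality
  have hform : ∀ t : ℝ, t ^ 2 * (a1 + ρ * s) + 2 * (t * (α⁻¹ * c)) * b - ρ * p < 0 := by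
    intro t
    have huv : Sum.elim (t • ζ) y ≠ 0 := by
      intro h
      apply hy0
      ext i
      exact congrFun h (Sum.inr i)
    have := hquad (t • ζ) y huv
    rw [hB12, hB21] at this
    have h1 : (t • ζ) ⬝ᵥ ((Aᵀ * S + S * A + ρ • S) *ᵥ (t • ζ)) = t ^ 2 * (a1 + ρ * s) := by
      rw [add_mulVec, mulVec_smul, mulVec_smul, smul_mulVec, dotProduct_add,
        dotProduct_smul, dotProduct_smul, smul_dotProduct, smul_dotProduct, dotProduct_smul]
      simp [ha1, hs]; ring
    have h2 : y ⬝ᵥ ((-(ρ • P)) *ᵥ y) = -(ρ * p) := by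
      rw [neg_mulVec, dotProduct_neg, smul_mulVec, dotProduct_smul]
      simp [hp]
    rw [h1, h2] at this
    linarith
  -- a1 + ρ s ≤ 0
  have ha : a1 + ρ * s ≤ 0 := by
    rcases eq_or_ne ζ 0 with h | h
    · simp [ha1, hs, h]
    · have huv : Sum.elim ζ (0 : Fin n ⊕ Fin n → ℝ) ≠ 0 := by
        intro hh
        apply h
        ext i
        exact congrFun hh (Sum.inl i)
      have := hquad ζ 0 huv
      simp only [mulVec_zero, dotProduct_zero, zero_dotProduct, add_zero] at this
      have h0 : ζ ⬝ᵥ ((α⁻¹ • (S * E * G0 n)) *ᵥ (0 : Fin n ⊕ Fin n → ℝ)) = 0 := by simp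
      rw [add_mulVec, dotProduct_add, smul_mulVec, dotProduct_smul] at this
      simp only [h0, smul_eq_mul] at this
      rw [← ha1, ← hs] at this
      linarith
  -- conclude with t = α / c
  have hkey := hform (α / c)
  have htc : (α / c) * (α⁻¹ * c) = 1 := by field_simp
  have ht1 : 0 < α / c := div_pos hα hc0
  have ht2 : α / c < 1 := (div_lt_one hc0).mpr hc
  have hq2 : (α / c) ^ 2 ≤ 1 := by nlinarith
  have hmono : a1 + ρ * s ≤ (α / c) ^ 2 * (a1 + ρ * s) := by nlinarith
  rw [htc] at hkey
  rw [hRPR]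
  linarith
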